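/- In the stock-market problem, let 0 < ε < 1/2, and let P(X_i | x_{i−1}, x̂_i) be the reverse test-channel conditional distribution of Table II: for 1 ≤ j ≤ k, P(X_i = j−1 | x_{i−1}=j, x̂_i=0) = ε, P(X_i = j | j, 0) = (1−ε)(1−p_j−q_j)/(1−q_j), P(X_i = j+1 | j, 0) = (1−ε)p_j/(1−q_j), P(X_i = j−1 | j, 1) = 1−ε, P(X_i = j | j, 1) = ε(1−p_j−q_j)/(1−q_j), P(X_i = j+1 | j, 1) = ε p_j/(1−q_j), and P(X_i = 0 | 0, 0) = 1−p_0, P(X_i = 1 | 0, 0) = p_0 (the pair (x_{i−1}=0, x̂_i=1) has probability zero). Then with c = ( log₂((1−ε)/ε) )^{−1} > 0 and d_0(x_{i−1}, x_i) defined by d_0(j, j−1) = 1 + c log₂ ε for 1 ≤ j ≤ k, d_0(j, j) = d_0(j, j+1) = c log₂( (1−ε)(1−p_j−q_j)/(1−q_j) ) resp. c log₂( (1−ε)p_j/(1−q_j) ) for 1 ≤ j ≤ k, and d_0(0, 0) = c log₂(1−p_0), d_0(0, 1) = c log₂ p_0, the identity e(x̂_i, x_{i−1}, x_i) = −c log₂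 P(x_i | x̂_i, x_{i−1}) + d_0(x_{i−1}, x_i) holds for every triple (x̂_i, x_{i−1}, x_i) with P(x_i | x̂_i, x_{i−1}) > 0. -/

import Mathlib

/-!
The identity `e(x̂ᵢ, x_{i-1}, xᵢ) = -c log₂ P(xᵢ | x̂ᵢ, x_{i-1}) + d₀(x_{i-1}, xᵢ)`
(equation `eq:binarycond1`) for the stock-market problem, where `P(·|·,·)` is the
reverse test-channel conditional distribution of Table II,
`c = (log₂((1-ε)/ε))⁻¹` and `d₀` is the explicit per-pair constant.
-/

open Finset

/-- Transition matrix of the stock-market birth-death chain on `{0,…,k}`: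
`i → i+1` with probability `p i`, `i → i-1` with probability `q i`,
`i → i` with probability `1 - p i - q i`. -/
noncomputable def stockTrans (k : ℕ) (p q : Fin (k + 1) → ℝ) (i j : Fin (k + 1)) : ℝ :=
  if (j : ℕ) = (i : ℕ) + 1 then p i
  else if (i : ℕ) = (j : ℕ) + 1 then q i
  else if i = j then 1 - p i - q i
  else 0

/-- The parameters of the stock chain: all transition probabilities strictly positive
where defined (no up-move from state `k`, no down-move from state `0`). -/
def IsStockChain (k : ℕ) (p q : Fin (k + 1) → ℝ) : Prop :=
  (∀ i : Fin (k + 1), (i : ℕ) < k → 0 < p i) ∧ p (Fin.last k) = 0 ∧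
    (∀ i : Fin (k + 1), 0 < (i : ℕ) → 0 < q i) ∧ q 0 = 0 ∧
    ∀ i : Fin (k + 1), 0 < 1 - p i - q i

/-- Per-letter distortion: an error occurs if the investor fails to predict a drop
(`x_i = x_{i-1} - 1` but `x̂_i = false`) or falsely predicts a drop
(`x_i ≥ x_{i-1}` but `x̂_i = true`). -/
def stockDist (k : ℕ) (b : Bool) (xp xc : Fin (k + 1)) : ℝ :=
  if (b = false ∧ (xc : ℕ) + 1 = (xp : ℕ)) ∨ (b = true ∧ (xp : ℕ) ≤ (xc : ℕ)) then 1 else 0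

/-- Table II: the reverse test channel `P(X_i = x_cur | X_{i-1} = x_prev, X̂_i = b)`. -/
noncomputable def tableII (k : ℕ) (p q : Fin (k + 1) → ℝ) (ε : ℝ)
    (xp : Fin (k + 1)) (b : Bool) (xc : Fin (k + 1)) : ℝ :=
  if (xp : ℕ) = 0 then
    (if b then 0
     else if (xc : ℕ) = 0 then 1 - p 0
     else if (xc : ℕ) = 1 then p 0
     else 0)
  else if b then
    (if (xc : ℕ) + 1 = (xp : ℕ) then 1 - ε
     else if xc = xp then ε * (1 - p xp - q xp) / (1 - q xp)
     else if (xc : ℕ) = (xp : ℕ) + 1 then ε * p xp / (1 - q xp)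
     else 0)
  else
    (if (xc : ℕ) + 1 = (xp : ℕ) then ε
     else if xc = xp then (1 - ε) * (1 - p xp - q xp) / (1 - q xp)
     else if (xc : ℕ) = (xp : ℕ) + 1 then (1 - ε) * p xp / (1 - q xp)
     else 0)

/-- The function `d₀(x_{i-1}, xᵢ)` of the stock-market example. -/
noncomputable def stockD0 (k : ℕ) (p q : Fin (k + 1) → ℝ) (ε c : ℝ)
    (xp xc : Fin (k + 1)) : ℝ :=
  if (xp : ℕ) = 0 then
    (if (xc : ℕ) = 0 then c * Real.logb 2 (1 - p 0)
     else if (xc : ℕ) = 1 then c * Real.logb 2 (p 0)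
     else 0)
  else if (xc : ℕ) + 1 = (xp : ℕ) then 1 + c * Real.logb 2 ε
  else if xc = xp then c * Real.logb 2 ((1 - ε) * (1 - p xp - q xp) / (1 - q xp))
  else if (xc : ℕ) = (xp : ℕ) + 1 then c * Real.logb 2 ((1 - ε) * p xp / (1 - q xp))
  else 0

/-- With `c = (log₂((1-ε)/ε))⁻¹ > 0` and the explicit `d₀`, the per-letter distortion
of the stock-market problem can be written as
`e(x̂ᵢ, x_{i-1}, xᵢ) = -c log₂ P(xᵢ | x̂ᵢ, x_{i-1}) + d₀(x_{i-1}, xᵢ)` at every triple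
of positive conditional probability, `P(·|·,·)` being the Table II reverse channel. -/
theorem stock_distortion_identity
    (k : ℕ) (hk : 0 < k) (p q : Fin (k + 1) → ℝ) (hchain : IsStockChain k p q)
    (ε : ℝ) (hε0 : 0 < ε) (hε : ε < 1 / 2) :
    0 < (Real.logb 2 ((1 - ε) / ε))⁻¹ ∧
    ∀ (b : Bool) (xp xc : Fin (k + 1)), 0 < tableII k p q ε xp b xc →
      stockDist k b xp xc =
        -((Real.logb 2 ((1 - ε) / ε))⁻¹ * Real.logb 2 (tableII k p q ε xp b xc)) +
          stockD0 k p q ε (Real.logb 2 ((1 - ε) / ε))⁻¹ xp xc := by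
  obtain ⟨hp, hpk, hq, hq0, hpq⟩ := hchain
  have hε1 : (0:ℝ) < 1 - ε := by linarith
  have hratio : 1 < (1 - ε) / ε := by rw [lt_div_iff₀ hε0]; linarith
  have hL : 0 < Real.logb 2 ((1 - ε) / ε) := Real.logb_pos one_lt_two hratio
  refine ⟨inv_pos.mpr hL, ?_⟩
  set c := (Real.logb 2 ((1 - ε) / ε))⁻¹ with hcdef
  have hpnn : ∀ i : Fin (k + 1), 0 ≤ p i := by
    intro i
    rcases lt_or_ge (i : ℕ) k with h | h
    · exact (hp i h).le
    · have hi : i = Fin.last k := by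
        apply Fin.ext; simp only [Fin.val_last]; omega
      rw [hi, hpk]
  have hqpos : ∀ i : Fin (k + 1), 0 < 1 - q i := fun i => by
    have := hpq i; have := hpnn i; linarith
  have hcL : c * Real.logb 2 ((1 - ε) / ε) = 1 := inv_mul_cancel₀ hL.ne'
  have hLdiff : Real.logb 2 ((1 - ε) / ε) = Real.logb 2 (1 - ε) - Real.logb 2 ε :=
    Real.logb_div (by linarith) hε0.ne'
  intro b xp xc hpos
  by_cases hxp0 : (xp : ℕ) = 0
  · cases b with
    | true => simp [tableII, hxp0] at hpos
    | false =>
      by_cases h0 : (xc : ℕ) = 0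
      · simp [stockDist, tableII, stockD0, hxp0, h0, (by omega : ¬((xc:ℕ) + 1 = (xp:ℕ)))]
      · by_cases h1 : (xc : ℕ) = 1
        · simp [stockDist, tableII, stockD0, hxp0, h0, h1,
            (by omega : ¬((xc:ℕ) + 1 = (xp:ℕ)))]
        · simp [tableII, hxp0, h0, h1] at hpos
  · by_cases hdown : (xc : ℕ) + 1 = (xp : ℕ)
    · cases b with
      | false =>
        simp [stockDist, tableII, stockD0, hxp0, hdown]
      | true =>
        simp [stockDist, tableII, stockD0, hxp0, hdown,
          (by rw [Fin.le_def]; omega : ¬ xp ≤ xc)]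
        have h2 : c * Real.logb 2 (1 - ε) - c * Real.logb 2 ε = 1 := by
          rw [← mul_sub, ← hLdiff]; exact hcL
        linarith
    · by_cases heq : xc = xp
      · subst heq
        have hA : 0 < 1 - p xc - q xc := hpq xc
        have hB : 0 < 1 - q xc := hqpos xc
        cases b with
        | false =>
          simp [stockDist, tableII, stockD0, hxp0, hdown,
            (by omega : ¬((xc:ℕ) + 1 = (xc:ℕ)))]
        | true =>
          have key : Real.logb 2 ((1 - ε) * (1 - p xc - q xc) / (1 - q xc)) -
              Real.logb 2 (ε * (1 - p xc - q xc) / (1 - q xc)) =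
              Real.logb 2 ((1 - ε) / ε) := by
            rw [← Real.logb_div (by positivity) (by positivity)]
            congr 1
            field_simp
          simp [stockDist, tableII, stockD0, hxp0, hdown, le_refl,
            (by omega : ¬((xc:ℕ) + 1 = (xc:ℕ)))]
          have h2 : c * Real.logb 2 ((1 - ε) * (1 - p xc - q xc) / (1 - q xc)) -
              c * Real.logb 2 (ε * (1 - p xc - q xc) / (1 - q xc)) = 1 := by
            rw [← mul_sub, key]; exact hcL
          linarith
      · by_cases hup : (xc : ℕ) = (xp : ℕ) + 1
        · have hB : 0 < 1 - q xp := hqpos xp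
          cases b with
          | false =>
            simp [stockDist, tableII, stockD0, hxp0, hdown, heq, eq_true hup,
              eq_true (show (xp:ℕ) ≤ (xc:ℕ) by omega)]
          | true =>
            simp only [tableII, hxp0, hdown, heq, eq_true hup, if_false, if_true,
              ite_true, ite_false, Bool.cond_true, eq_self_iff_true] at hpos
            have hppos : 0 < p xp := by
              have h := mul_pos hpos hB
              rw [div_mul_cancel₀ _ hB.ne'] at h
              nlinarith
            have key : Real.logb 2 ((1 - ε) * p xp / (1 - q xp)) -
                Real.logb 2 (ε * p xp / (1 - q xp)) =
                Real.logb 2 ((1 - ε) / ε) := by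
              rw [← Real.logb_div (by positivity) (by positivity)]
              congr 1
              field_simp
            simp [stockDist, tableII, stockD0, hxp0, hdown, heq, eq_true hup,
              eq_true (show (xp:ℕ) ≤ (xc:ℕ) by omega)]
            have h2 : c * Real.logb 2 ((1 - ε) * p xp / (1 - q xp)) -
                c * Real.logb 2 (ε * p xp / (1 - q xp)) = 1 := by
              rw [← mul_sub, key]; exact hcL
            linarith
        · cases b <;> simp [tableII, hxp0, hdown, heq, hup] at hpos
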